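/- Let R be an n×n Hermitian positive semidefinite matrix and z < 0. The fixed-point equation δ = (1/n)·Tr(R(−zI + δR)^{-1}) has a unique solution δ ≥ 0, and it satisfies δ ≤ ‖R‖/|z|. -/

import Mathlib

open Matrix MeasureTheory Filter
open scoped ComplexOrder Matrix.Norms.L2Operator

private lemma trace_formula_aux {n : ℕ} (R : Matrix (Fin n) (Fin n) ℂ) (hR : R.PosSemidef)
    (z : ℝ) (hz : z < 0) (δ : ℝ) (hδ : 0 ≤ δ) :
    ((1 / (n : ℂ)) * Matrix.trace
      (R * ((-z : ℂ) • (1 : Matrix (Fin n) (Fin n) ℂ) + (δ : ℂ) • R)⁻¹)).re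
    = (1 / (n : ℝ)) * ∑ i, hR.1.eigenvalues i / (-z + δ * hR.1.eigenvalues i) := by
  set μ := hR.1.eigenvalues with hμdef
  set U : Matrix (Fin n) (Fin n) ℂ := (hR.1.eigenvectorUnitary : Matrix (Fin n) (Fin n) ℂ)
    with hU
  have hUU : U * Uᴴ = 1 := (Matrix.mem_unitaryGroup_iff).mp (hR.1.eigenvectorUnitary).2
  have hUU' : Uᴴ * U = 1 := (Matrix.mem_unitaryGroup_iff').mp (hR.1.eigenvectorUnitary).2
  have hcancel : ∀ X : Matrix (Fin n) (Fin n) ℂ, Uᴴ * (U * X) = X := fun X => by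
    rw [← mul_assoc, hUU', one_mul]
  set d : Fin n → ℝ := fun i => -z + δ * μ i with hd
  have hdpos : ∀ i, 0 < d i := fun i =>
    add_pos_of_pos_of_nonneg (by linarith) (mul_nonneg hδ (hR.eigenvalues_nonneg i))
  have hdne : ∀ i, ((d i : ℂ)) ≠ 0 := fun i => Complex.ofReal_ne_zero.mpr (hdpos i).ne'
  have hspec : R = U * diagonal (fun i => (μ i : ℂ)) * Uᴴ := hR.1.spectral_theorem
  have hD : (-z : ℂ) • (1 : Matrix (Fin n) (Fin n) ℂ)
      + (δ : ℂ) • diagonal (fun i => (μ i : ℂ)) = diagonal (fun i => (d i : ℂ)) := by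
    rw [← Matrix.diagonal_one, ← Matrix.diagonal_smul, ← Matrix.diagonal_smul,
      Matrix.diagonal_add]
    simp [hd]
  have hM : (-z : ℂ) • (1 : Matrix (Fin n) (Fin n) ℂ) + (δ : ℂ) • R
      = U * diagonal (fun i => (d i : ℂ)) * Uᴴ := by
    conv_lhs => rw [hspec]
    rw [← hD, mul_add, add_mul]
    congr 1
    · rw [Matrix.mul_smul, Matrix.smul_mul, mul_one, hUU]
    · rw [Matrix.mul_smul, Matrix.smul_mul]
  have hinv : ((-z : ℂ) • (1 : Matrix (Fin n) (Fin n) ℂ) + (δ : ℂ) • R)⁻¹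
      = U * diagonal (fun i => ((d i : ℂ))⁻¹) * Uᴴ := by
    apply Matrix.inv_eq_right_inv
    rw [hM]
    simp only [Matrix.mul_assoc]
    rw [hcancel, ← Matrix.mul_assoc (diagonal _), Matrix.diagonal_mul_diagonal]
    have : (fun i => (d i : ℂ) * ((d i : ℂ))⁻¹) = fun _ => (1 : ℂ) := by
      funext i; exact mul_inv_cancel₀ (hdne i)
    rw [this, Matrix.diagonal_one, Matrix.one_mul, hUU]
  rw [hinv]
  conv_lhs => rw [hspec]
  have hRM : U * diagonal (fun i => (μ i : ℂ)) * Uᴴ * (U * diagonal (fun i => ((d i : ℂ))⁻¹) * Uᴴ)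
      = U * (diagonal (fun i => (μ i : ℂ)) * diagonal (fun i => ((d i : ℂ))⁻¹)) * Uᴴ := by
    simp only [Matrix.mul_assoc]
    rw [hcancel]
  rw [hRM, Matrix.trace_mul_comm, hcancel,
    Matrix.diagonal_mul_diagonal, Matrix.trace_diagonal]
  have hsum : (∑ i, (μ i : ℂ) * ((d i : ℂ))⁻¹) = ((∑ i, μ i / d i : ℝ) : ℂ) := by
    push_cast
    simp [div_eq_mul_inv]
  rw [hsum, show (1 / (n : ℂ)) * ((∑ i, μ i / d i : ℝ) : ℂ)
      = (((1 / (n : ℝ)) * ∑ i, μ i / d i : ℝ) : ℂ) by push_cast; ring, Complex.ofReal_re]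

/-- Existence, uniqueness and bound for the scalar fixed-point equation. -/
theorem stmt_4 {n : ℕ} (hn : 0 < n) (R : Matrix (Fin n) (Fin n) ℂ) (hR : R.PosSemidef)
    (z : ℝ) (hz : z < 0) :
    (∃! δ : ℝ, 0 ≤ δ ∧ δ = ((1 / (n : ℂ)) * Matrix.trace
      (R * ((-z : ℂ) • (1 : Matrix (Fin n) (Fin n) ℂ) + (δ : ℂ) • R)⁻¹)).re) ∧
    ∀ δ : ℝ, 0 ≤ δ →
      δ = ((1 / (n : ℂ)) * Matrix.trace
        (R * ((-z : ℂ) • (1 : Matrix (Fin n) (Fin n) ℂ) + (δ : ℂ) • R)⁻¹)).re →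
      δ ≤ ‖R‖ / |z| := by
  set μ := hR.1.eigenvalues with hμdef
  have hμ0 : ∀ i, 0 ≤ μ i := fun i => hR.eigenvalues_nonneg i
  have hμb : ∀ i, μ i ≤ ‖R‖ := by
    intro i
    set v := hR.1.eigenvectorBasis i with hv
    have h1 := R.l2_opNorm_mulVec v
    have h3 : R *ᵥ v = μ i • v := hR.1.mulVec_eigenvectorBasis i
    rw [h3] at h1
    have h2 : (EuclideanSpace.equiv (Fin n) ℂ).symm (μ i • v) = μ i • v := rfl
    rw [h2, norm_smul, hR.1.eigenvectorBasis.orthonormal.1 i] at h1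
    simp only [Real.norm_eq_abs, mul_one] at h1
    exact (le_abs_self _).trans h1
  set S : ℝ → ℝ := fun δ => (1 / (n : ℝ)) * ∑ i, μ i / (-z + δ * μ i) with hS
  have key : ∀ δ : ℝ, 0 ≤ δ →
      ((1 / (n : ℂ)) * Matrix.trace
        (R * ((-z : ℂ) • (1 : Matrix (Fin n) (Fin n) ℂ) + (δ : ℂ) • R)⁻¹)).re = S δ :=
    fun δ hδ => trace_formula_aux R hR z hz δ hδ
  have hdpos : ∀ (δ : ℝ), 0 ≤ δ → ∀ i, 0 < -z + δ * μ i := fun δ hδ i =>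
    add_pos_of_pos_of_nonneg (by linarith) (mul_nonneg hδ (hμ0 i))
  -- antitonicity of S on [0, ∞)
  have hmono : ∀ a b : ℝ, 0 ≤ a → a ≤ b → S b ≤ S a := by
    intro a b ha hab
    apply mul_le_mul_of_nonneg_left _ (by positivity)
    apply Finset.sum_le_sum
    intro i _
    apply div_le_div_of_nonneg_left (hμ0 i) (hdpos a ha i)
    have := mul_le_mul_of_nonneg_right hab (hμ0 i)
    linarith
  have hSnonneg : ∀ δ : ℝ, 0 ≤ δ → 0 ≤ S δ := by
    intro δ hδ
    apply mul_nonneg (by positivity)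
    apply Finset.sum_nonneg
    intro i _
    exact div_nonneg (hμ0 i) (hdpos δ hδ i).le
  set δ₀ := S 0 with hδ₀
  have hδ₀0 : 0 ≤ δ₀ := hSnonneg 0 le_rfl
  -- continuity of S on [0, δ₀]
  have hcont : ContinuousOn S (Set.Icc 0 δ₀) := by
    apply ContinuousOn.mul continuousOn_const
    apply continuousOn_finset_sum
    intro i _
    apply ContinuousOn.div continuousOn_const
    · exact (continuousOn_const.add ((continuousOn_id' _).mul continuousOn_const))
    · intro x hx
      exact (hdpos x hx.1 i).ne'
  -- existence
  have hG : ContinuousOn (fun δ => δ - S δ) (Set.Icc 0 δ₀) :=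
    (continuousOn_id' _).sub hcont
  have hivt := intermediate_value_Icc hδ₀0 hG
  have h0mem : (0 : ℝ) ∈ Set.Icc ((fun δ => δ - S δ) 0) ((fun δ => δ - S δ) δ₀) := by
    constructor
    · simp only [zero_sub, neg_nonpos]
      exact hδ₀0
    · simp only
      have := hmono 0 δ₀ le_rfl hδ₀0
      linarith
  obtain ⟨c, hc, hceq⟩ := hivt h0mem
  have hcfix : c = S c := by
    simp only at hceq
    linarith
  -- the bound, for any nonneg fixed point
  have hbound : ∀ δ : ℝ, 0 ≤ δ → δ = S δ → δ ≤ ‖R‖ / |z| := by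
    intro δ hδ hfix
    have h1 : δ ≤ S 0 := hfix.le.trans (hmono 0 δ le_rfl hδ)
    have h2 : S 0 ≤ ‖R‖ / |z| := by
      rw [abs_of_neg hz]
      have hzpos : (0 : ℝ) < -z := by linarith
      have : ∑ i, μ i / (-z + 0 * μ i) ≤ ∑ _i : Fin n, ‖R‖ / (-z) := by
        apply Finset.sum_le_sum
        intro i _
        rw [zero_mul, add_zero]
        exact div_le_div_of_nonneg_right (hμb i) hzpos.le
      calc S 0 ≤ (1 / (n : ℝ)) * ∑ _i : Fin n, ‖R‖ / (-z) := by
            apply mul_le_mul_of_nonneg_left this (by positivity)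
        _ = ‖R‖ / (-z) := by
            rw [Finset.sum_const, Finset.card_univ, Fintype.card_fin, nsmul_eq_mul]
            have hn' : (n : ℝ) ≠ 0 := Nat.cast_ne_zero.mpr hn.ne'
            field_simp
    exact h1.trans h2
  -- uniqueness
  refine ⟨⟨c, ⟨hc.1, by rw [key c hc.1]; exact hcfix⟩, ?_⟩, ?_⟩
  · rintro y ⟨hy0, hyfix⟩
    rw [key y hy0] at hyfix
    rcases le_total y c with h | h
    · have : c ≤ y := by
        calc c = S c := hcfix
          _ ≤ S y := hmono y c hy0 h
          _ = y := hyfix.symm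
      linarith
    · have : y ≤ c := by
        calc y = S y := hyfix
          _ ≤ S c := hmono c y hc.1 h
          _ = c := hcfix.symm
      linarith
  · intro δ hδ hfix
    rw [key δ hδ] at hfix
    exact hbound δ hδ hfix
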